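/- arXiv:0909.5352 — 2 statements merged into one kernel-verified Lean document; each statement's English description precedes it below -/
import Mathlib

section
/- The orbit of an element x under O(u(2)^m ⊕ ⟨1/4⟩) containing a generator g of the ⟨1/4⟩ summand has q-value 1/4 and size 2^{2m} + 2^m, while the orbit of e+f+g has q-value −3/4 (i.e., 5/4 in Q/2Z) and size 2^{2m} − 2^m. -/
/-- Underlying group of the finite quadratic form `u(2)^m ⊕ ⟨1/4⟩`. -/
abbrev FQF (m : ℕ) : Type := (Fin m → ZMod 2 × ZMod 2) × ZMod 4

/-- The quadratic form `u(2)^m ⊕ ⟨1/4⟩` with values in `ℚ/2ℤ`: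
each `u(2)` summand has `q(e)=q(f)=0`, `b(e,f)=1/2`, and the `⟨1/4⟩` summand
has `q(g)=1/4`. -/
def qFQF {m : ℕ} (x : FQF m) : AddCircle (2 : ℚ) :=
  (((∑ i, ((x.1 i).1.val : ℚ) * ((x.1 i).2.val : ℚ)) + ((x.2.val : ℚ))^2 / 4 : ℚ) :
    AddCircle (2 : ℚ))

/-- `y` is in the `O(q)`-orbit of `x`. -/
def inOrbit {m : ℕ} (x y : FQF m) : Prop :=
  ∃ σ : FQF m ≃+ FQF m, (∀ z, qFQF (σ z) = qFQF z) ∧ σ x = y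

/-- Standard generators `e`, `f` of one `u(2)` summand and `g` of `⟨1/4⟩`. -/
def eElt (m : ℕ) : FQF m := (fun i => if i.val = 0 then (1, 0) else 0, 0)
def fElt (m : ℕ) : FQF m := (fun i => if i.val = 0 then (0, 1) else 0, 0)
def gElt (m : ℕ) : FQF m := (0, 1)

namespace FQFaux

variable {m : ℕ}

/-- natural-number quadratic value of the u-part -/
def quN (v : Fin m → ZMod 2 × ZMod 2) : ℕ := ∑ i, (v i).1.val * (v i).2.val

/-- the associated bilinear form on the u-part (mod 2) -/
def Bil (v w : Fin m → ZMod 2 × ZMod 2) : ZMod 2 :=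
  ∑ i, ((v i).1 * (w i).2 + (v i).2 * (w i).1)

lemma zmod2_cases (t : ZMod 2) : t = 0 ∨ t = 1 := by revert t; decide

lemma addself (v : Fin m → ZMod 2 × ZMod 2) : v + v = 0 := by
  have h : ∀ a : ZMod 2, a + a = 0 := by decide
  funext i
  show v i + v i = 0
  exact Prod.ext (h _) (h _)

lemma addCircle_eq (a b : ℚ) : (↑a : AddCircle (2 : ℚ)) = ↑b ↔ ∃ k : ℤ, a - b = 2 * k := by
  show (QuotientAddGroup.mk a : AddCircle (2:ℚ)) = QuotientAddGroup.mk b ↔ _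
  rw [QuotientAddGroup.eq]
  simp only [AddSubgroup.mem_zmultiples_iff, zsmul_eq_mul]
  constructor
  · rintro ⟨k, hk⟩; exact ⟨-k, by push_cast at hk ⊢; linarith⟩
  · rintro ⟨k, hk⟩; exact ⟨-k, by push_cast; linarith⟩

lemma qFQF_eq (x : FQF m) :
    qFQF x = (((quN x.1 : ℚ) + ((x.2.val : ℚ))^2 / 4 : ℚ) : AddCircle (2 : ℚ)) := by
  unfold qFQF quN; push_cast; ring_nf

lemma qFQF_eq_iff (x y : FQF m) : qFQF x = qFQF y ↔
    (8:ℤ) ∣ (4*(quN x.1 : ℤ) + (x.2.val : ℤ)^2 - 4*(quN y.1 : ℤ) - (y.2.val : ℤ)^2) := by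
  rw [qFQF_eq, qFQF_eq, addCircle_eq]
  constructor
  · rintro ⟨k, hk⟩
    refine ⟨k, ?_⟩
    have h4 : (4*(quN x.1 : ℚ) + (x.2.val:ℚ)^2 - 4*(quN y.1:ℚ) - (y.2.val:ℚ)^2) = 8 * k := by
      linarith
    exact_mod_cast h4
  · rintro ⟨k, hk⟩
    refine ⟨k, ?_⟩
    have := congrArg (fun t : ℤ => (t : ℚ)) hk
    push_cast at this
    linarith

lemma cast2_iff (n : ℕ) (e : ZMod 2) : (n : ZMod 2) = e ↔ n % 2 = e.val := by
  rw [← ZMod.natCast_mod n 2]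
  rcases Nat.mod_two_eq_zero_or_one n with h | h <;> rw [h] <;> revert e <;> decide

lemma quN_cast (v : Fin m → ZMod 2 × ZMod 2) :
    ((quN v : ℕ) : ZMod 2) = ∑ i, (v i).1 * (v i).2 := by
  unfold quN
  push_cast
  refine Finset.sum_congr rfl fun i _ => ?_
  rw [ZMod.natCast_val, ZMod.natCast_val, ZMod.cast_id, ZMod.cast_id]

lemma Bil_add_left (v v' w : Fin m → ZMod 2 × ZMod 2) :
    Bil (v + v') w = Bil v w + Bil v' w := by
  unfold Bil
  rw [← Finset.sum_add_distrib]
  refine Finset.sum_congr rfl fun i _ => ?_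
  simp only [Pi.add_apply, Prod.fst_add, Prod.snd_add]
  ring

lemma Bil_comm (v w : Fin m → ZMod 2 × ZMod 2) : Bil v w = Bil w v := by
  unfold Bil
  refine Finset.sum_congr rfl fun i _ => ?_
  ring

lemma Bil_self (v : Fin m → ZMod 2 × ZMod 2) : Bil v v = 0 := by
  unfold Bil
  refine Finset.sum_eq_zero fun i _ => ?_
  rw [mul_comm]
  exact CharTwo.add_self_eq_zero _

lemma Bil_zero_left (w : Fin m → ZMod 2 × ZMod 2) : Bil 0 w = 0 := by
  unfold Bil; simp

lemma Bil_smul (t : ZMod 2) (u w : Fin m → ZMod 2 × ZMod 2) :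
    Bil (t • u) w = t * Bil u w := by
  rcases zmod2_cases t with rfl | rfl
  · simp [Bil_zero_left]
  · simp

lemma quN_add_parity (v w : Fin m → ZMod 2 × ZMod 2) :
    ((quN (v + w) : ℕ) : ZMod 2) = (quN v : ZMod 2) + (quN w : ZMod 2) + Bil v w := by
  rw [quN_cast, quN_cast, quN_cast]
  unfold Bil
  rw [← Finset.sum_add_distrib, ← Finset.sum_add_distrib]
  refine Finset.sum_congr rfl fun i _ => ?_
  simp only [Pi.add_apply, Prod.fst_add, Prod.snd_add]
  ring

lemma level_iff (ε : ZMod 2) (v : Fin m → ZMod 2 × ZMod 2) (c : ZMod 4) :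
    qFQF (v, c) = ((1/4 + (ε.val : ℚ) : ℚ) : AddCircle (2 : ℚ)) ↔
      ((quN v : ZMod 2) = ε ∧ (c = 1 ∨ c = 3)) := by
  have hεε : ((quN v : ZMod 2) = ε) ↔ (quN v) % 2 = ε.val := cast2_iff _ _
  have hcc : (c = 1 ∨ c = 3) ↔ (c.val = 1 ∨ c.val = 3) := by revert c; decide
  rw [qFQF_eq, addCircle_eq]
  have h1 : (∃ k : ℤ, ((quN v : ℚ) + ((c.val : ℚ))^2/4) - (1/4 + (ε.val : ℚ)) = 2 * k) ↔
      (8:ℤ) ∣ (4*(quN v : ℤ) + (c.val : ℤ)^2 - 1 - 4*(ε.val : ℤ)) := by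
    constructor
    · rintro ⟨k, hk⟩
      refine ⟨k, ?_⟩
      have h4 : (4*(quN v : ℚ) + (c.val:ℚ)^2 - 1 - 4*(ε.val:ℚ)) = 8 * k := by linarith
      exact_mod_cast h4
    · rintro ⟨k, hk⟩
      refine ⟨k, ?_⟩
      have := congrArg (fun t : ℤ => (t : ℚ)) hk
      push_cast at this
      linarith
  rw [h1, hεε, hcc]
  have hc4 : c.val < 4 := ZMod.val_lt c
  have hε2 : ε.val < 2 := ZMod.val_lt ε
  rcases (by omega : c.val = 0 ∨ c.val = 1 ∨ c.val = 2 ∨ c.val = 3) with h|h|h|h <;> rw [h] <;>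
    rcases (by omega : ε.val = 0 ∨ ε.val = 1) with h'|h' <;> rw [h'] <;> push_cast <;>
    norm_num <;> omega

/-! ### The isometries -/

def chi (w : Fin m → ZMod 2 × ZMod 2) (z : FQF m) : ZMod 2 :=
  (z.2.val : ZMod 2) + Bil z.1 w

def dbl (t : ZMod 2) : ZMod 4 := 2 * t.val

lemma val2_add : ∀ a b : ZMod 4,
    (((a+b).val : ℕ) : ZMod 2) = (a.val : ZMod 2) + (b.val : ZMod 2) := by decide

lemma dbl_add : ∀ a b : ZMod 2, dbl (a + b) = dbl a + dbl b := by decide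

lemma chi_add (w : Fin m → ZMod 2 × ZMod 2) (z z' : FQF m) :
    chi w (z + z') = chi w z + chi w z' := by
  unfold chi
  rw [Prod.snd_add, Prod.fst_add, val2_add, Bil_add_left]
  abel

def tauFun (w : Fin m → ZMod 2 × ZMod 2) (z : FQF m) : FQF m :=
  (z.1 + Bil z.1 w • w, z.2)

def sigFun (w : Fin m → ZMod 2 × ZMod 2) (z : FQF m) : FQF m :=
  (z.1 + chi w z • w, z.2 + dbl (chi w z))

def nuFun (z : FQF m) : FQF m := (z.1, -z.2)

lemma tau_add (w : Fin m → ZMod 2 × ZMod 2) (z z' : FQF m) :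
    tauFun w (z + z') = tauFun w z + tauFun w z' := by
  unfold tauFun
  refine Prod.ext ?_ rfl
  show (z.1 + z'.1) + Bil (z.1 + z'.1) w • w = _
  rw [Bil_add_left, add_smul]
  show _ = (z.1 + Bil z.1 w • w) + (z'.1 + Bil z'.1 w • w)
  abel

lemma tau_invol (w : Fin m → ZMod 2 × ZMod 2) (z : FQF m) :
    tauFun w (tauFun w z) = z := by
  unfold tauFun
  refine Prod.ext ?_ rfl
  show (z.1 + Bil z.1 w • w) + Bil (z.1 + Bil z.1 w • w) w • w = z.1
  rw [Bil_add_left, Bil_smul, Bil_self, mul_zero, add_zero, add_assoc, ← add_smul]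
  have h2 : Bil z.1 w + Bil z.1 w = 0 := by
    rcases zmod2_cases (Bil z.1 w) with h | h <;> rw [h] <;> decide
  rw [h2, zero_smul, add_zero]

lemma sig_add (w : Fin m → ZMod 2 × ZMod 2) (z z' : FQF m) :
    sigFun w (z + z') = sigFun w z + sigFun w z' := by
  unfold sigFun
  rw [chi_add]
  refine Prod.ext ?_ ?_
  · show (z.1 + z'.1) + (chi w z + chi w z') • w = _
    rw [add_smul]
    show _ = (z.1 + chi w z • w) + (z'.1 + chi w z' • w)
    abel
  · show (z.2 + z'.2) + dbl (chi w z + chi w z') = _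
    rw [dbl_add]
    show _ = (z.2 + dbl (chi w z)) + (z'.2 + dbl (chi w z'))
    abel

lemma chi_sigFun (w : Fin m → ZMod 2 × ZMod 2) (z : FQF m) :
    chi w (sigFun w z) = chi w z := by
  unfold chi sigFun
  show (((z.2 + dbl (chi w z)).val : ℕ) : ZMod 2) + Bil (z.1 + chi w z • w) w = _
  rw [val2_add, Bil_add_left, Bil_smul, Bil_self, mul_zero]
  have h1 : ∀ t : ZMod 2, (((dbl t).val : ℕ) : ZMod 2) = 0 := by decide
  rw [h1]
  abel

lemma sig_invol (w : Fin m → ZMod 2 × ZMod 2) (z : FQF m) :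
    sigFun w (sigFun w z) = z := by
  have hc := chi_sigFun w z
  rw [show sigFun w (sigFun w z) = ((sigFun w z).1 + chi w (sigFun w z) • w,
      (sigFun w z).2 + dbl (chi w (sigFun w z))) from rfl, hc]
  refine Prod.ext ?_ ?_
  · show (z.1 + chi w z • w) + chi w z • w = z.1
    rw [add_assoc, ← add_smul]
    have h2 : chi w z + chi w z = 0 := by
      rcases zmod2_cases (chi w z) with h | h <;> rw [h] <;> decide
    rw [h2, zero_smul, add_zero]
  · show (z.2 + dbl (chi w z)) + dbl (chi w z) = z.2
    have h2 : dbl (chi w z) + dbl (chi w z) = 0 := by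
      rcases zmod2_cases (chi w z) with h | h <;> rw [h] <;> decide
    rw [add_assoc, h2, add_zero]

lemma nu_add (z z' : FQF m) : nuFun (z + z') = nuFun z + nuFun z' := by
  unfold nuFun
  refine Prod.ext rfl ?_
  show -(z.2 + z'.2) = -z.2 + -z'.2
  ring

lemma nu_invol (z : FQF m) : nuFun (nuFun z) = z := by
  unfold nuFun
  show (z.1, - -z.2) = z
  rw [neg_neg]

def tauEquiv (w : Fin m → ZMod 2 × ZMod 2) : FQF m ≃+ FQF m :=
  AddEquiv.mk' ⟨tauFun w, tauFun w, tau_invol w, tau_invol w⟩ (tau_add w)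

def sigEquiv (w : Fin m → ZMod 2 × ZMod 2) : FQF m ≃+ FQF m :=
  AddEquiv.mk' ⟨sigFun w, sigFun w, sig_invol w, sig_invol w⟩ (sig_add w)

def nuEquiv : FQF m ≃+ FQF m :=
  AddEquiv.mk' ⟨nuFun, nuFun, nu_invol, nu_invol⟩ nu_add

/-! ### q-preservation -/

lemma tau_pres (w : Fin m → ZMod 2 × ZMod 2) (hw : ((quN w : ℕ) : ZMod 2) = 1) (z : FQF m) :
    qFQF (tauFun w z) = qFQF z := by
  rcases zmod2_cases (Bil z.1 w) with hβ | hβ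
  · unfold tauFun
    rw [hβ, zero_smul, add_zero]
  · unfold tauFun
    rw [hβ, one_smul]
    rw [qFQF_eq_iff]
    have hchar : ∀ t : ZMod 2, t + 1 + 1 = t := by decide
    have hp : ((quN (z.1 + w) : ℕ) : ZMod 2) = ((quN z.1 : ℕ) : ZMod 2) := by
      rw [quN_add_parity, hw, hβ]
      exact hchar _
    have h0 := (cast2_iff (quN (z.1+w)) (((quN z.1 : ℕ)) : ZMod 2)).mp hp
    have h1 := (cast2_iff (quN z.1) (((quN z.1 : ℕ)) : ZMod 2)).mp rfl
    dsimp only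
    omega

lemma sig_pres (w : Fin m → ZMod 2 × ZMod 2) (hw : ((quN w : ℕ) : ZMod 2) = 0) (z : FQF m) :
    qFQF (sigFun w z) = qFQF z := by
  rcases zmod2_cases (chi w z) with hχ | hχ
  · unfold sigFun
    rw [hχ, zero_smul, add_zero, show dbl 0 = 0 from rfl, add_zero]
  · unfold sigFun
    rw [hχ, one_smul, show dbl 1 = 2 from rfl]
    have hχ' : ((z.2.val : ℕ) : ZMod 2) + Bil z.1 w = 1 := hχ
    rw [qFQF_eq_iff]
    dsimp only
    have hv4 : z.2.val < 4 := ZMod.val_lt _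
    have hadd : (z.2 + 2).val = (z.2.val + 2) % 4 := by
      rw [ZMod.val_add, show (2 : ZMod 4).val = 2 from rfl]
    have hp0 := quN_add_parity z.1 w
    rw [hw, add_zero] at hp0
    rcases zmod2_cases (Bil z.1 w) with hβ | hβ
    · rw [hβ, add_zero] at hp0 hχ'
      have hodd : z.2.val % 2 = 1 := by
        have := (cast2_iff z.2.val 1).mp hχ'
        exact this
      have hpar : quN (z.1 + w) % 2 = quN z.1 % 2 := by
        have := (cast2_iff (quN (z.1+w)) ((quN z.1 : ℕ) : ZMod 2)).mp hp0
        have h2 := (cast2_iff (quN z.1) ((quN z.1 : ℕ) : ZMod 2)).mp rfl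
        omega
      rcases (by omega : z.2.val = 1 ∨ z.2.val = 3) with h | h <;> rw [h] at hadd <;>
        rw [hadd, h] <;> norm_num <;> omega
    · rw [hβ] at hp0 hχ'
      have heven : z.2.val % 2 = 0 := by
        have h1 : ((z.2.val : ℕ) : ZMod 2) = 0 := by
          have hch : ∀ t : ZMod 2, t + 1 = 1 → t = 0 := by decide
          exact hch _ hχ'
        have := (cast2_iff z.2.val 0).mp h1
        simpa using this
      have hpar : quN (z.1 + w) % 2 = (quN z.1 + 1) % 2 := by
        have hcast : ((quN (z.1+w) : ℕ) : ZMod 2) = (((quN z.1 + 1 : ℕ)) : ZMod 2) := by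
          push_cast
          rw [hp0]
        have := (cast2_iff (quN (z.1+w)) (((quN z.1 + 1 : ℕ)) : ZMod 2)).mp hcast
        have h2 := (cast2_iff (quN z.1 + 1) (((quN z.1 + 1 : ℕ)) : ZMod 2)).mp rfl
        omega
      rcases (by omega : z.2.val = 0 ∨ z.2.val = 2) with h | h <;> rw [h] at hadd <;>
        rw [hadd, h] <;> norm_num <;> omega

lemma nu_pres (z : FQF m) : qFQF (nuFun z) = qFQF z := by
  rw [qFQF_eq_iff]
  unfold nuFun
  dsimp only
  rw [← Nat.cast_pow, ← Nat.cast_pow]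
  have h8 : ∀ c : ZMod 4, ((-c).val^2) % 8 = (c.val^2) % 8 := by decide
  have := h8 z.2
  omega

/-! ### Transitivity on level sets -/

lemma finish_orbit (x y : FQF m) (σ : FQF m ≃+ FQF m) (hpres : ∀ z, qFQF (σ z) = qFQF z)
    (d : ZMod 4) (hσ : σ x = (y.1, d)) (hd : d = 1 ∨ d = 3) (hy : y.2 = 1 ∨ y.2 = 3) :
    inOrbit x y := by
  by_cases hdy : d = y.2
  · exact ⟨σ, hpres, by rw [hσ, hdy]⟩
  · refine ⟨σ.trans nuEquiv, fun z => ?_, ?_⟩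
    · show qFQF (nuFun (σ z)) = qFQF z
      rw [nu_pres, hpres]
    · show nuFun (σ x) = y
      rw [hσ]
      have hneg : -d = y.2 := by
        have : ∀ d e : ZMod 4, (d = 1 ∨ d = 3) → (e = 1 ∨ e = 3) → d ≠ e → -d = e := by decide
        exact this d y.2 hd hy hdy
      show (y.1, -d) = y
      rw [hneg]

lemma orbit_of_level (x y : FQF m)
    (h1 : ((quN x.1 : ℕ) : ZMod 2) = ((quN y.1 : ℕ) : ZMod 2))
    (hx : x.2 = 1 ∨ x.2 = 3) (hy : y.2 = 1 ∨ y.2 = 3) : inOrbit x y := by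
  set w := x.1 + y.1 with hwdef
  have hxy : x.1 + w = y.1 := by
    rw [hwdef, ← add_assoc, addself, zero_add]
  have hBw : Bil x.1 w = Bil x.1 y.1 := by
    rw [hwdef, Bil_comm, Bil_add_left, Bil_self, zero_add, Bil_comm]
  have hchar2 : ∀ t : ZMod 2, t + t = 0 := by decide
  have hqw : ((quN w : ℕ) : ZMod 2) = Bil x.1 y.1 := by
    rw [hwdef, quN_add_parity, ← h1, hchar2, zero_add]
  have hcx : ((x.2.val : ℕ) : ZMod 2) = 1 := by
    rcases hx with h | h <;> rw [h] <;> decide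
  rcases zmod2_cases (Bil x.1 y.1) with hB | hB
  · -- use sigma
    have hw0 : ((quN w : ℕ) : ZMod 2) = 0 := by rw [hqw, hB]
    have hχ : chi w x = 1 := by
      unfold chi
      rw [hcx, hBw, hB, add_zero]
    have hs : sigFun w x = (y.1, x.2 + 2) := by
      unfold sigFun
      rw [hχ, one_smul, hxy, show dbl 1 = 2 from rfl]
    refine finish_orbit x y (sigEquiv w) (sig_pres w hw0) (x.2 + 2) hs ?_ hy
    rcases hx with h | h <;> rw [h] <;> decide
  · -- use tau
    have hw1 : ((quN w : ℕ) : ZMod 2) = 1 := by rw [hqw, hB]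
    have ht : tauFun w x = (y.1, x.2) := by
      unfold tauFun
      rw [hBw, hB, one_smul, hxy]
    exact finish_orbit x y (tauEquiv w) (tau_pres w hw1) x.2 ht hx hy

lemma orbit_iff (x : FQF m) (hx2 : x.2 = 1 ∨ x.2 = 3) (y : FQF m) :
    inOrbit x y ↔
      (((quN y.1 : ℕ) : ZMod 2) = ((quN x.1 : ℕ) : ZMod 2) ∧ (y.2 = 1 ∨ y.2 = 3)) := by
  constructor
  · rintro ⟨σ, hpres, rfl⟩
    have hqx : qFQF x = ((1/4 + ((((quN x.1 : ℕ) : ZMod 2)).val : ℚ) : ℚ) : AddCircle (2:ℚ)) :=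
      (level_iff _ x.1 x.2).mpr ⟨rfl, hx2⟩
    have hq : qFQF (σ x) = ((1/4 + ((((quN x.1 : ℕ) : ZMod 2)).val : ℚ) : ℚ) : AddCircle (2:ℚ)) := by
      rw [hpres, hqx]
    exact (level_iff _ (σ x).1 (σ x).2).mp hq
  · rintro ⟨h1, h2⟩
    exact orbit_of_level x y h1.symm hx2 h2

/-! ### Counting -/

lemma sum_prod_pow {X : Type*} [Fintype X] (g : X → ℤ) :
    ∀ k : ℕ, ∑ v : Fin k → X, ∏ i, g (v i) = (∑ x : X, g x) ^ k := by
  intro k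
  induction k with
  | zero => simp
  | succ k ih =>
    rw [← Equiv.sum_comp (Fin.consEquiv (fun _ : Fin (k+1) => X))
      (fun v : Fin (k+1) → X => ∏ i, g (v i))]
    have hsplit : ∀ p : X × (Fin k → X),
        (∏ i, g ((Fin.consEquiv (fun _ : Fin (k+1) => X)) p i)) = g p.1 * ∏ i, g (p.2 i) := by
      intro p
      rw [Fin.prod_univ_succ]
      rfl
    rw [Finset.sum_congr rfl (fun p _ => hsplit p), Fintype.sum_prod_type]
    simp_rw [← Finset.mul_sum]
    rw [ih, ← Finset.sum_mul, pow_succ]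
    ring

def chr (t : ZMod 2) : ℤ := if t = 0 then 1 else -1

lemma chr_add : ∀ a b : ZMod 2, chr (a + b) = chr a * chr b := by decide

lemma chr_sum {ι : Type*} (s : Finset ι) (f : ι → ZMod 2) :
    chr (∑ i ∈ s, f i) = ∏ i ∈ s, chr (f i) := by
  induction s using Finset.cons_induction with
  | empty => simp [chr]
  | cons a s ha ih => rw [Finset.sum_cons, Finset.prod_cons, chr_add, ih]

lemma char_sum_eval (m : ℕ) :
    ∑ v : Fin m → ZMod 2 × ZMod 2, chr ((quN v : ℕ) : ZMod 2) = 2 ^ m := by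
  have h1 : ∀ v : Fin m → ZMod 2 × ZMod 2,
      chr ((quN v : ℕ) : ZMod 2) = ∏ i, chr ((v i).1 * (v i).2) := by
    intro v
    rw [quN_cast, chr_sum]
  rw [Finset.sum_congr rfl fun v _ => h1 v]
  rw [sum_prod_pow (fun p : ZMod 2 × ZMod 2 => chr (p.1 * p.2)) m]
  norm_num [show (∑ p : ZMod 2 × ZMod 2, chr (p.1 * p.2)) = 2 from by decide]

lemma card_levels (m : ℕ) (ε : ZMod 2) :
    2 * (Finset.univ.filter
        (fun v : Fin m → ZMod 2 × ZMod 2 => ((quN v : ℕ) : ZMod 2) = ε)).card =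
      2^(2*m) + chr ε * 2^m := by
  classical
  set N := (Finset.univ.filter
      (fun v : Fin m → ZMod 2 × ZMod 2 => ((quN v : ℕ) : ZMod 2) = ε)).card with hN
  set N' := (Finset.univ.filter
      (fun v : Fin m → ZMod 2 × ZMod 2 => ¬ ((quN v : ℕ) : ZMod 2) = ε)).card with hN'
  have hsplit : N + N' = 4^m := by
    rw [hN, hN', Finset.card_filter_add_card_filter_not]
    rw [Finset.card_univ, Fintype.card_fun, Fintype.card_fin, Fintype.card_prod, ZMod.card]
  have hchrne : ∀ t e : ZMod 2, ¬ t = e → chr t = -chr e := by decide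
  have hsum : (∑ v : Fin m → ZMod 2 × ZMod 2, chr ((quN v : ℕ) : ZMod 2))
      = (N : ℤ) * chr ε + (N' : ℤ) * (- chr ε) := by
    rw [← Finset.sum_filter_add_sum_filter_not Finset.univ
      (fun v : Fin m → ZMod 2 × ZMod 2 => ((quN v : ℕ) : ZMod 2) = ε)]
    congr 1
    · have hcg : ∀ v ∈ Finset.univ.filter
          (fun v : Fin m → ZMod 2 × ZMod 2 => ((quN v : ℕ) : ZMod 2) = ε),
          chr ((quN v : ℕ) : ZMod 2) = chr ε :=
        fun v hv => by rw [(Finset.mem_filter.mp hv).2]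
      rw [Finset.sum_congr rfl hcg, Finset.sum_const, nsmul_eq_mul]
    · have hcg : ∀ v ∈ Finset.univ.filter
          (fun v : Fin m → ZMod 2 × ZMod 2 => ¬ ((quN v : ℕ) : ZMod 2) = ε),
          chr ((quN v : ℕ) : ZMod 2) = - chr ε :=
        fun v hv => hchrne _ _ (Finset.mem_filter.mp hv).2
      rw [Finset.sum_congr rfl hcg, Finset.sum_const, nsmul_eq_mul]
  rw [char_sum_eval m] at hsum
  have h4 : (2:ℤ)^(2*m) = 4^m := by rw [pow_mul]; norm_num
  have hsplit' : (N : ℤ) + N' = 4^m := by exact_mod_cast hsplit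
  rcases zmod2_cases ε with rfl | rfl <;>
    simp only [show chr 0 = 1 from rfl, show chr 1 = -1 from rfl] at hsum ⊢ <;>
    linarith

lemma orbit_card (x : FQF m) (hx2 : x.2 = 1 ∨ x.2 = 3) (ε : ZMod 2)
    (hε : ((quN x.1 : ℕ) : ZMod 2) = ε) :
    Nat.card {y : FQF m // inOrbit x y} =
      (Finset.univ.filter (fun v : Fin m → ZMod 2 × ZMod 2 =>
        ((quN v : ℕ) : ZMod 2) = ε)).card * 2 := by
  classical
  subst hε
  rw [Nat.card_congr (Equiv.subtypeEquivRight (fun y => orbit_iff x hx2 y))]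
  rw [Nat.card_congr (Equiv.subtypeProdEquivProd
    (p := fun v : Fin m → ZMod 2 × ZMod 2 => ((quN v : ℕ) : ZMod 2) = ((quN x.1 : ℕ) : ZMod 2))
    (q := fun c : ZMod 4 => c = 1 ∨ c = 3))]
  rw [Nat.card_prod]
  congr 1
  · rw [Nat.card_eq_fintype_card, Fintype.card_subtype]
  · rw [Nat.card_eq_fintype_card]
    decide

end FQFaux

open FQFaux in
/-- the `O(u(2)^m ⊕ ⟨1/4⟩)`-orbit of `g` has q-value `1/4` and
size `2^{2m}+2^m`, while the orbit of `e+f+g` has q-value `-3/4` (i.e. `5/4`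
in `ℚ/2ℤ`) and size `2^{2m}-2^m`. -/
theorem orbit_of_g_and_efg (m : ℕ) (hm : 0 < m) :
    (∀ y : FQF m, inOrbit (gElt m) y → qFQF y = ((1/4 : ℚ) : AddCircle (2 : ℚ))) ∧
    Nat.card {y : FQF m // inOrbit (gElt m) y} = 2 ^ (2 * m) + 2 ^ m ∧
    (∀ y : FQF m, inOrbit (eElt m + fElt m + gElt m) y →
      qFQF y = ((5/4 : ℚ) : AddCircle (2 : ℚ))) ∧
    Nat.card {y : FQF m // inOrbit (eElt m + fElt m + gElt m) y} = 2 ^ (2 * m) - 2 ^ m := by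
  classical
  have hg2 : (gElt m).2 = 1 ∨ (gElt m).2 = 3 := Or.inl rfl
  have hgq : ((quN (gElt m).1 : ℕ) : ZMod 2) = 0 := by
    simp [quN, gElt]
  set x := eElt m + fElt m + gElt m with hxdef
  have hx2 : x.2 = 1 ∨ x.2 = 3 := by
    left
    show (0 : ZMod 4) + 0 + 1 = 1
    decide
  have hcoord : ∀ i : Fin m, x.1 i = if i.val = 0 then ((1:ZMod 2),(1:ZMod 2)) else 0 := by
    intro i
    show (if i.val = 0 then ((1:ZMod 2),(0:ZMod 2)) else 0)
        + (if i.val = 0 then ((0:ZMod 2),(1:ZMod 2)) else 0) + 0 = _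
    split_ifs <;> simp [Prod.ext_iff]
  have hxq : ((quN x.1 : ℕ) : ZMod 2) = 1 := by
    have hterm : ∀ i : Fin m, (x.1 i).1.val * (x.1 i).2.val
        = if i = (⟨0, hm⟩ : Fin m) then 1 else 0 := by
      intro i
      rw [hcoord i]
      by_cases h : i.val = 0
      · rw [if_pos h, if_pos (Fin.ext h)]
        rfl
      · rw [if_neg h, if_neg (fun hh => h (by rw [hh]))]
        rfl
    have : quN x.1 = 1 := by
      unfold quN
      rw [Finset.sum_congr rfl (fun i _ => hterm i), Finset.sum_ite_eq']
      simp
    rw [this]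
    rfl
  have hval14 : ((1/4 + (((0:ZMod 2)).val : ℚ) : ℚ) : AddCircle (2:ℚ))
      = ((1/4 : ℚ) : AddCircle (2:ℚ)) := by
    rw [show ((0:ZMod 2)).val = 0 from rfl]
    norm_num
  have hval54 : ((1/4 + (((1:ZMod 2)).val : ℚ) : ℚ) : AddCircle (2:ℚ))
      = ((5/4 : ℚ) : AddCircle (2:ℚ)) := by
    rw [show ((1:ZMod 2)).val = 1 from rfl]
    norm_num
  have hqg : qFQF (gElt m) = ((1/4 : ℚ) : AddCircle (2 : ℚ)) := by
    rw [← hval14]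
    exact (level_iff 0 (gElt m).1 (gElt m).2).mpr ⟨hgq, hg2⟩
  have hqx : qFQF x = ((5/4 : ℚ) : AddCircle (2 : ℚ)) := by
    rw [← hval54]
    exact (level_iff 1 x.1 x.2).mpr ⟨hxq, hx2⟩
  have hle : 2^m ≤ 2^(2*m) := Nat.pow_le_pow_right (by norm_num) (by omega)
  refine ⟨?_, ?_, ?_, ?_⟩
  · rintro y ⟨σ, hp, rfl⟩
    rw [hp, hqg]
  · rw [orbit_card (gElt m) hg2 0 hgq]
    have h := card_levels m 0
    rw [show chr 0 = 1 from rfl, one_mul] at h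
    set N := (Finset.univ.filter (fun v : Fin m → ZMod 2 × ZMod 2 =>
      ((quN v : ℕ) : ZMod 2) = (0 : ZMod 2))).card with hN
    have h' : ((2*N : ℕ) : ℤ) = (((2^(2*m) + 2^m : ℕ)) : ℤ) := by push_cast; linarith
    have h'' : 2 * N = 2^(2*m) + 2^m := Nat.cast_injective h'
    omega
  · rintro y ⟨σ, hp, rfl⟩
    rw [hp, hqx]
  · rw [orbit_card x hx2 1 hxq]
    have h := card_levels m 1
    rw [show chr 1 = -1 from rfl] at h
    set N := (Finset.univ.filter (fun v : Fin m → ZMod 2 × ZMod 2 =>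
      ((quN v : ℕ) : ZMod 2) = (1 : ZMod 2))).card with hN
    have h' : ((2*N + 2^m : ℕ) : ℤ) = (((2^(2*m) : ℕ)) : ℤ) := by push_cast; linarith
    have h'' : 2 * N + 2^m = 2^(2*m) := Nat.cast_injective h'
    omega
end

section
/- Let D_7 be the root lattice of type D_7, viewed inside Z^7 (vectors with even coordinate sum). If K ⊂ D_7 is a sublattice of index 4, then K contains a vector of norm 2 (a root). Equivalently, no index-4 sublattice of D_7 is root-free. -/
/-- The root lattice `D_7`: vectors in `ℤ^7` with even coordinate sum. -/
def D7 : AddSubgroup (Fin 7 → ℤ) where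
  carrier := {x | Even (∑ i, x i)}
  zero_mem' := by simp
  add_mem' := by
    intro a b ha hb
    simpa [Finset.sum_add_distrib] using ha.add hb
  neg_mem' := by
    intro a ha
    simpa using ha.neg

lemma root_norm (a b : Fin 7) (h : a ≠ b) :
    ∑ i, (((Pi.single a 1 - Pi.single b 1 : Fin 7 → ℤ)) i) ^ 2 = 2 := by
  have key : ∀ i : Fin 7, (((Pi.single a 1 - Pi.single b 1 : Fin 7 → ℤ)) i) ^ 2
      = (if i = a then (1:ℤ) else 0) + (if i = b then 1 else 0) := by
    intro i
    simp only [Pi.sub_apply, Pi.single_apply]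
    rcases eq_or_ne i a with h1 | h1 <;> rcases eq_or_ne i b with h2 | h2 <;>
      simp_all
  rw [Finset.sum_congr rfl fun i _ => key i, Finset.sum_add_distrib]
  simp

lemma fvec_mem (a : Fin 7) : (Pi.single 0 1 - Pi.single a 1 : Fin 7 → ℤ) ∈ D7 := by
  have : (∑ i, (Pi.single 0 1 - Pi.single a 1 : Fin 7 → ℤ) i) = 0 := by
    simp [Finset.sum_sub_distrib, Pi.single_apply]
  simp [D7, AddSubgroup.mem_mk, Set.mem_setOf_eq, this]

/-- every sublattice of `D_7` of index 4 contains a root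
(a vector of norm 2). -/
theorem index_four_sublattice_of_D7_has_root (K : AddSubgroup (Fin 7 → ℤ))
    (hKD : K ≤ D7) (hidx : K.relIndex D7 = 4) :
    ∃ x ∈ K, ∑ i, (x i) ^ 2 = 2 := by
  set K' := K.addSubgroupOf D7 with hK'
  have hcard : Nat.card (D7 ⧸ K') = 4 := hidx
  have hfin : Finite (D7 ⧸ K') := Nat.finite_of_card_ne_zero (by rw [hcard]; norm_num)
  classical
  have hFT : Fintype (D7 ⧸ K') := Fintype.ofFinite _
  -- seven (we use five) vectors e₀ - e_j
  let fv : Fin 5 → (Fin 7 → ℤ) := fun j => (Pi.single 0 1 - Pi.single (j.castLE (by norm_num)) 1 : Fin 7 → ℤ)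
  let g : Fin 5 → D7 ⧸ K' := fun j => QuotientAddGroup.mk ⟨fv j, fvec_mem _⟩
  have hlt : Fintype.card (D7 ⧸ K') < Fintype.card (Fin 5) := by
    rw [Fintype.card_fin, ← Nat.card_eq_fintype_card, hcard]; norm_num
  obtain ⟨i, j, hne, hij⟩ := Fintype.exists_ne_map_eq_of_card_lt g hlt
  have hmem : -(fv i) + fv j ∈ K := by
    have := (QuotientAddGroup.eq (s := K') (a := ⟨fv i, fvec_mem _⟩) (b := ⟨fv j, fvec_mem _⟩)).1 hij
    simpa [hK', AddSubgroup.mem_addSubgroupOf] using this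
  refine ⟨-(fv i) + fv j, hmem, ?_⟩
  have hne' : (i.castLE (by norm_num) : Fin 7) ≠ j.castLE (by norm_num) := by
    intro h
    exact hne (Fin.castLE_injective _ h)
  have heq : -(fv i) + fv j = (Pi.single (i.castLE (by norm_num)) 1
      - Pi.single (j.castLE (by norm_num)) 1 : Fin 7 → ℤ) := by
    simp only [fv]; abel
  rw [heq]
  exact root_norm _ _ hne'
end
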